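/- Let m, n ≥ 1 and let A be an m×n real matrix. Then there exists a constant c > 0, depending only on A, such that for every b ∈ ℝ^m for which P_{A,b} := {u ∈ ℝ^n : Au ≤ b} is nonempty and for every x ∈ ℝ^n, one has dist(x, P_{A,b}) ≤ c · ‖(Ax − b)_+‖, where (Ax − b)_+ denotes the componentwise positive part of the vector Ax − b and ‖·‖ is the Euclidean norm on ℝ^m. -/

import Mathlib

open scoped RealInnerProductSpace

variable {E : Type*} [NormedAddCommGroup E] [InnerProductSpace ℝ E]

lemma coneCarathAux {ι : Type*} [Fintype ι] (a : ι → E) :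
    ∀ (k : ℕ) (lam : ι → ℝ), (∀ i, 0 ≤ lam i) →
      (Finset.univ.filter fun i => lam i ≠ 0).card = k →
      ∃ mu : ι → ℝ, (∀ i, 0 ≤ mu i) ∧ (∀ i, lam i = 0 → mu i = 0) ∧
        (∑ i, mu i • a i = ∑ i, lam i • a i) ∧
        LinearIndependent ℝ (fun i : {i // mu i ≠ 0} => a i) := by
  classical
  intro k
  induction k using Nat.strong_induction_on with
  | _ k IH =>
  intro lam hlam hk
  by_cases hli : LinearIndependent ℝ (fun i : {i // lam i ≠ 0} => a i)
  · exact ⟨lam, hlam, fun i h => h, rfl, hli⟩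
  -- helper: given a signed dependence with a positive coefficient, reduce support
  have key : ∀ c : ι → ℝ, (∑ i, c i • a i = 0) → (∀ i, lam i = 0 → c i = 0) →
      (∃ p, 0 < c p) →
      ∃ mu : ι → ℝ, (∀ i, 0 ≤ mu i) ∧ (∀ i, lam i = 0 → mu i = 0) ∧
        (∑ i, mu i • a i = ∑ i, lam i • a i) ∧
        LinearIndependent ℝ (fun i : {i // mu i ≠ 0} => a i) := by
    rintro c hcsum hcsupp ⟨p, hp⟩
    set T := Finset.univ.filter fun i => 0 < c i with hT
    have hTne : T.Nonempty := ⟨p, by simp [hT, hp]⟩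
    obtain ⟨i₀, hi₀T, hmin⟩ := T.exists_min_image (fun i => lam i / c i) hTne
    have hc₀ : 0 < c i₀ := (Finset.mem_filter.mp hi₀T).2
    set t := lam i₀ / c i₀ with htdef
    have ht : 0 ≤ t := div_nonneg (hlam _) hc₀.le
    set lam' := fun i => lam i - t * c i with hlam'
    have h1 : ∀ i, 0 ≤ lam' i := by
      intro i
      rcases le_or_gt (c i) 0 with h | h
      · have h2 : t * c i ≤ 0 := mul_nonpos_of_nonneg_of_nonpos ht h
        have := hlam i
        simp only [hlam']
        linarith
      · have hiT : i ∈ T := by simp [hT, h]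
        have h2 := hmin i hiT
        rw [div_le_div_iff₀ hc₀ h] at h2
        simp only [hlam', htdef]
        rw [div_mul_eq_mul_div, sub_nonneg, div_le_iff₀ hc₀]
        linarith
    have h2 : ∀ i, lam i = 0 → lam' i = 0 := by
      intro i h
      simp [hlam', h, hcsupp i h]
    have h3 : lam' i₀ = 0 := by
      simp only [hlam', htdef]
      field_simp
      ring
    have hsum' : ∑ i, lam' i • a i = ∑ i, lam i • a i := by
      simp only [hlam', sub_smul, Finset.sum_sub_distrib, mul_smul]
      rw [← Finset.smul_sum, hcsum, smul_zero, sub_zero]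
    have hlam₀ : lam i₀ ≠ 0 := by
      intro h
      rw [hcsupp i₀ h] at hc₀
      exact lt_irrefl _ hc₀
    have hcard : (Finset.univ.filter fun i => lam' i ≠ 0).card < k := by
      rw [← hk]
      apply Finset.card_lt_card
      constructor
      · intro i hi
        simp only [Finset.mem_filter, Finset.mem_univ, true_and] at hi ⊢
        intro h; exact hi (h2 i h)
      · intro hsub
        have hi₀ : i₀ ∈ Finset.univ.filter fun i => lam i ≠ 0 := by
          simp [hlam₀]
        have := hsub hi₀
        simp only [Finset.mem_filter, Finset.mem_univ, true_and] at this
        exact this h3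
    obtain ⟨mu, m1, m2, m3, m4⟩ := IH _ hcard lam' h1 rfl
    exact ⟨mu, m1, fun i h => m2 i (h2 i h), m3.trans hsum', m4⟩
  -- produce a dependence
  obtain ⟨g, hg0, j, hgj⟩ := Fintype.not_linearIndependent_iff.mp hli
  set c : ι → ℝ := fun i => if h : lam i ≠ 0 then g ⟨i, h⟩ else 0 with hc
  have hcsupp : ∀ i, lam i = 0 → c i = 0 := by
    intro i h; simp [hc, h]
  have hcsum : ∑ i, c i • a i = 0 := by
    rw [← hg0]
    rw [← Finset.sum_subset (Finset.subset_univ (Finset.univ.filter fun i => lam i ≠ 0))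
      (by intro i _ hi
          simp only [Finset.mem_filter, Finset.mem_univ, true_and, not_not] at hi
          rw [hcsupp i hi, zero_smul])]
    rw [Finset.sum_subtype (p := fun i => lam i ≠ 0) (Finset.univ.filter fun i => lam i ≠ 0)
      (by intro i; simp) (fun i => c i • a i)]
    apply Finset.sum_congr rfl
    intro i _
    simp only [hc]
    rw [dif_pos i.2]
  have hcj : c (↑j) ≠ 0 := by
    have : c (↑j) = g j := dif_pos j.2
    rw [this]; exact hgj
  rcases lt_or_gt_of_ne hcj with h | h
  · refine key (fun i => -c i) ?_ (fun i hi => by rw [hcsupp i hi, neg_zero])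
      ⟨j, by linarith⟩
    rw [show (∑ i, -c i • a i) = -∑ i, c i • a i by simp, hcsum, neg_zero]
  · exact key c hcsum hcsupp ⟨j, h⟩

lemma coneCarath {ι : Type*} [Fintype ι] (a : ι → E) (lam : ι → ℝ) (hlam : ∀ i, 0 ≤ lam i) :
    ∃ mu : ι → ℝ, (∀ i, 0 ≤ mu i) ∧ (∀ i, lam i = 0 → mu i = 0) ∧
      (∑ i, mu i • a i = ∑ i, lam i • a i) ∧
      LinearIndependent ℝ (fun i : {i // mu i ≠ 0} => a i) := by
  classical
  exact coneCarathAux a _ lam hlam rfl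

variable {E : Type*} [NormedAddCommGroup E] [InnerProductSpace ℝ E] [FiniteDimensional ℝ E]

lemma coeffBound {ι : Type*} [Fintype ι] (g : ι → E) (hg : LinearIndependent ℝ g) :
    ∃ C : ℝ, 0 ≤ C ∧ ∀ w : ι → ℝ, ∑ i, |w i| ≤ C * ‖∑ i, w i • g i‖ := by
  classical
  set T : (ι → ℝ) →ₗ[ℝ] E :=
    { toFun := fun w => ∑ i, w i • g i
      map_add' := by intro w w'; simp [add_smul, Finset.sum_add_distrib]
      map_smul' := by intro c w; simp [smul_smul, Finset.smul_sum] } with hTdef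
  have hTinj : Function.Injective T := by
    intro w w' h
    have hz : T (w - w') = 0 := by rw [map_sub, h, sub_self]
    have : ∑ i, (w - w') i • g i = 0 := hz
    have hzero := Fintype.linearIndependent_iff.mp hg _ this
    funext i
    have := hzero i
    simpa [sub_eq_zero] using this
  set e := LinearEquiv.ofInjective T hTinj with hedef
  set f := LinearMap.toContinuousLinearMap (e.symm.toLinearMap) with hfdef
  refine ⟨(Fintype.card ι : ℝ) * ‖f‖, by positivity, ?_⟩
  intro w
  have h1 : ∀ i, |w i| ≤ ‖w‖ := by
    intro i
    have := norm_le_pi_norm w i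
    simpa using this
  have h2 : ∑ i, |w i| ≤ (Fintype.card ι : ℝ) * ‖w‖ := by
    calc ∑ i, |w i| ≤ ∑ _i : ι, ‖w‖ := Finset.sum_le_sum fun i _ => h1 i
      _ = (Fintype.card ι : ℝ) * ‖w‖ := by simp [Finset.sum_const, nsmul_eq_mul, Finset.card_univ]
  have h3 : ‖w‖ ≤ ‖f‖ * ‖T w‖ := by
    have he : e w = ⟨T w, LinearMap.mem_range_self T w⟩ := by
      apply Subtype.ext
      simp [hedef, LinearEquiv.ofInjective_apply]
    have hw : w = f ⟨T w, LinearMap.mem_range_self T w⟩ := by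
      rw [hfdef]
      simp only [LinearMap.coe_toContinuousLinearMap', LinearEquiv.coe_coe]
      rw [← he, LinearEquiv.symm_apply_apply]
    calc ‖w‖ = ‖f ⟨T w, LinearMap.mem_range_self T w⟩‖ := by rw [← hw]
      _ ≤ ‖f‖ * ‖(⟨T w, LinearMap.mem_range_self T w⟩ : LinearMap.range T)‖ := f.le_opNorm _
      _ = ‖f‖ * ‖T w‖ := rfl
  calc ∑ i, |w i| ≤ (Fintype.card ι : ℝ) * ‖w‖ := h2
    _ ≤ (Fintype.card ι : ℝ) * (‖f‖ * ‖T w‖) := by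
        apply mul_le_mul_of_nonneg_left h3 (by positivity)
    _ = (Fintype.card ι : ℝ) * ‖f‖ * ‖∑ i, w i • g i‖ := by ring_nf; rfl

lemma sum_subtype_eq_of_support {ι : Type*} [Fintype ι] (S : Finset ι) (f : ι → E)
    (hf : ∀ i, i ∉ S → f i = 0) : ∑ i : ↥S, f ↑i = ∑ i, f i := by
  rw [Finset.sum_coe_sort S f]
  exact Finset.sum_subset (Finset.subset_univ S) (fun i _ hi => hf i hi)

lemma coneSet_isClosed {ι : Type*} [Fintype ι] (a : ι → E) :
    IsClosed {v : E | ∃ lam : ι → ℝ, (∀ i, 0 ≤ lam i) ∧ v = ∑ i, lam i • a i} := by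
  classical
  -- for each finset S, the cone generated by linearly independent rows in S
  have hDclosed : ∀ S : Finset ι, LinearIndependent ℝ (fun i : ↥S => a ↑i) →
      IsClosed ((fun w : ↥S → ℝ => ∑ i : ↥S, w i • a ↑i) '' {w | ∀ i, 0 ≤ w i}) := by
    intro S hli
    set T : (↥S → ℝ) →ₗ[ℝ] E :=
      { toFun := fun w => ∑ i : ↥S, w i • a ↑i
        map_add' := by intro w w'; simp [add_smul, Finset.sum_add_distrib]
        map_smul' := by intro c w; simp [smul_smul, Finset.smul_sum] } with hTdef
    have hTinj : Function.Injective T := by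
      intro w w' h
      have hz : T (w - w') = 0 := by rw [map_sub, h, sub_self]
      have : ∑ i : ↥S, (w - w') i • a ↑i = 0 := hz
      have hzero := Fintype.linearIndependent_iff.mp hli _ this
      funext i
      simpa [sub_eq_zero] using hzero i
    have hemb := LinearMap.isClosedEmbedding_of_injective
      (LinearMap.ker_eq_bot.mpr hTinj) (f := T)
    have hcl : IsClosed {w : ↥S → ℝ | ∀ i, 0 ≤ w i} := by
      have : {w : ↥S → ℝ | ∀ i, 0 ≤ w i} = ⋂ i, {w : ↥S → ℝ | 0 ≤ w i} := by
        ext w; simp [Set.mem_iInter]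
      rw [this]
      exact isClosed_iInter fun i => isClosed_le continuous_const (continuous_apply i)
    exact hemb.isClosedMap _ hcl
  have hunion : {v : E | ∃ lam : ι → ℝ, (∀ i, 0 ≤ lam i) ∧ v = ∑ i, lam i • a i}
      = ⋃ S ∈ {S : Finset ι | LinearIndependent ℝ (fun i : ↥S => a ↑i)},
          (fun w : ↥S → ℝ => ∑ i : ↥S, w i • a ↑i) '' {w | ∀ i, 0 ≤ w i} := by
    ext v
    simp only [Set.mem_setOf_eq, Set.mem_iUnion, Set.mem_image, exists_prop]
    constructor
    · rintro ⟨lam, hlam0, rfl⟩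
      obtain ⟨mu, hmu0, _hsupp, hsum, hli⟩ := coneCarath a lam hlam0
      set S : Finset ι := Finset.univ.filter (fun i => mu i ≠ 0) with hS
      have hSli : LinearIndependent ℝ (fun i : ↥S => a ↑i) := by
        let e : ↥S ≃ {i // mu i ≠ 0} :=
          Equiv.subtypeEquivRight (fun i => by simp [hS])
        have h := hli.comp e e.injective
        have hcomp : ((fun i : {i // mu i ≠ 0} => a ↑i) ∘ e) = fun i : ↥S => a ↑i := by
          funext i
          simp [e, Equiv.subtypeEquivRight]
          rfl
        rwa [hcomp] at h
      refine ⟨S, hSli, fun i : ↥S => mu ↑i, fun i => hmu0 _, ?_⟩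
      rw [← hsum]
      exact sum_subtype_eq_of_support S (fun i => mu i • a i)
        (fun i hi => by
          have h0 : mu i = 0 := by
            by_contra h
            exact hi (by simp [hS, h])
          show mu i • a i = 0
          rw [h0, zero_smul])
    · rintro ⟨S, _hSli, w, hw0, rfl⟩
      refine ⟨fun i => if h : i ∈ S then w ⟨i, h⟩ else 0, ?_, ?_⟩
      · intro i
        show 0 ≤ if h : i ∈ S then w ⟨i, h⟩ else 0
        by_cases h : i ∈ S
        · rw [dif_pos h]; exact hw0 _
        · rw [dif_neg h]
      · rw [← sum_subtype_eq_of_support S (fun i => (if h : i ∈ S then w ⟨i, h⟩ else (0:ℝ)) • a i)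
          (fun i hi => by
            show (if h : i ∈ S then w ⟨i, h⟩ else (0:ℝ)) • a i = 0
            rw [dif_neg hi, zero_smul])]
        apply Finset.sum_congr rfl
        intro i _
        show w i • a ↑i = (if h : ↑i ∈ S then w ⟨↑i, h⟩ else (0:ℝ)) • a ↑i
        rw [dif_pos i.2]
  rw [hunion]
  exact Set.Finite.isClosed_biUnion (Set.toFinite _) (fun S hS => hDclosed S hS)

lemma farkasLemma {ι : Type*} [Fintype ι] (a : ι → E) (v : E)
    (hv : ∀ d : E, (∀ i, ⟪a i, d⟫ ≤ 0) → ⟪v, d⟫ ≤ 0) :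
    ∃ lam : ι → ℝ, (∀ i, 0 ≤ lam i) ∧ v = ∑ i, lam i • a i := by
  classical
  by_contra hcon
  set K : ConvexCone ℝ E :=
    { carrier := {v : E | ∃ lam : ι → ℝ, (∀ i, 0 ≤ lam i) ∧ v = ∑ i, lam i • a i}
      smul_mem' := by
        rintro c hc x ⟨lam, h0, rfl⟩
        exact ⟨fun i => c * lam i, fun i => mul_nonneg hc.le (h0 i),
          by rw [Finset.smul_sum]; simp [smul_smul]⟩
      add_mem' := by
        rintro x ⟨lam, h0, rfl⟩ y ⟨lam', h0', rfl⟩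
        exact ⟨fun i => lam i + lam' i, fun i => add_nonneg (h0 i) (h0' i),
          by simp [add_smul, Finset.sum_add_distrib]⟩ } with hK
  have hne : (K : Set E).Nonempty := ⟨0, ⟨fun _ => 0, fun _ => le_refl 0, by simp⟩⟩
  have hcl : IsClosed (K : Set E) := coneSet_isClosed a
  have hvK : v ∉ K := hcon
  obtain ⟨y, hy1, hy2⟩ := ProperCone.hyperplane_separation' (x₀ := v)
    (C := ({ carrier := (K : Set E)
             add_mem' := fun hx hy => K.add_mem hx hy
             zero_mem' := ⟨fun _ => 0, fun _ => le_refl 0, by simp⟩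
             smul_mem' := by
               rintro c x ⟨lam, h0, rfl⟩
               exact ⟨fun i => (c : ℝ) * lam i, fun i => mul_nonneg c.2 (h0 i),
                 by show (c : ℝ) • ∑ i, lam i • a i = _; rw [Finset.smul_sum]; simp [smul_smul]⟩
             isClosed' := hcl } : ProperCone ℝ E)) hvK
  have haK : ∀ i, a i ∈ K := by
    intro i
    refine ⟨fun j => if j = i then 1 else 0,
      fun j => by show (0:ℝ) ≤ if j = i then 1 else 0; split <;> norm_num, ?_⟩
    rw [Finset.sum_eq_single i
      (fun j _ hj => by
        show (if j = i then (1:ℝ) else 0) • a j = 0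
        rw [if_neg hj, zero_smul])
      (fun h => absurd (Finset.mem_univ i) h)]
    show a i = (if i = i then (1:ℝ) else 0) • a i
    rw [if_pos rfl, one_smul]
  have hd : ∀ i, ⟪a i, -y⟫ ≤ 0 := by
    intro i
    have := hy1 _ (haK i)
    rw [inner_neg_right]
    linarith
  have h2 := hv (-y) hd
  rw [inner_neg_right] at h2
  have h3 : ⟪y, v⟫ = ⟪v, y⟫ := real_inner_comm _ _
  linarith

/-- Hoffman, 1952: for an `m × n` real matrix `A` with rows
`a₁, …, a_m`, there is a constant `c > 0`, depending only on `A`, such that for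
every `b ∈ ℝᵐ` with `P_{A,b} = {u : Au ≤ b}` nonempty and every `x ∈ ℝⁿ`,
`dist(x, P_{A,b}) ≤ c · ‖(Ax - b)₊‖`, where `(Ax - b)₊` is the componentwise
positive part and `‖·‖` the Euclidean norm on `ℝᵐ`. -/
theorem stmt16 (m n : ℕ) (hm : 1 ≤ m) (hn : 1 ≤ n)
    (a : Fin m → EuclideanSpace ℝ (Fin n)) :
    ∃ c : ℝ, 0 < c ∧ ∀ b : Fin m → ℝ,
      {u : EuclideanSpace ℝ (Fin n) | ∀ i, ⟪a i, u⟫ ≤ b i}.Nonempty →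
      ∀ x : EuclideanSpace ℝ (Fin n),
        Metric.infDist x {u : EuclideanSpace ℝ (Fin n) | ∀ i, ⟪a i, u⟫ ≤ b i} ≤
          c * Real.sqrt (∑ i, max (⟪a i, x⟫ - b i) 0 ^ 2) := by
  classical
  have key : ∀ S : Finset (Fin m), ∃ C : ℝ, 0 ≤ C ∧
      (LinearIndependent ℝ (fun i : ↥S => a ↑i) →
        ∀ w : ↥S → ℝ, ∑ i, |w i| ≤ C * ‖∑ i : ↥S, w i • a ↑i‖) := by
    intro S
    by_cases h : LinearIndependent ℝ (fun i : ↥S => a ↑i)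
    · obtain ⟨C, hC0, hC⟩ := coeffBound _ h
      exact ⟨C, hC0, fun _ => hC⟩
    · exact ⟨0, le_rfl, fun h' => absurd h' h⟩
  choose C hC0 hC using key
  have hsumC : 0 ≤ ∑ S : Finset (Fin m), C S := Finset.sum_nonneg fun S _ => hC0 S
  refine ⟨1 + ∑ S : Finset (Fin m), C S, by linarith, ?_⟩
  intro b hne x
  set P := {u : EuclideanSpace ℝ (Fin n) | ∀ i, ⟪a i, u⟫ ≤ b i} with hPdef
  set e := Real.sqrt (∑ i, max (⟪a i, x⟫ - b i) 0 ^ 2) with hedef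
  have he0 : 0 ≤ e := Real.sqrt_nonneg _
  have hemax : ∀ i, ⟪a i, x⟫ - b i ≤ e := by
    intro i
    refine le_trans (le_max_left _ 0) ?_
    rw [show max (⟪a i, x⟫ - b i) 0 = Real.sqrt (max (⟪a i, x⟫ - b i) 0 ^ 2) from
      (Real.sqrt_sq (le_max_right _ _)).symm]
    exact Real.sqrt_le_sqrt (Finset.single_le_sum
      (f := fun j => max (⟪a j, x⟫ - b j) 0 ^ 2) (fun j _ => sq_nonneg _) (Finset.mem_univ i))
  have hPclosed : IsClosed P := by
    have : P = ⋂ i, {u : EuclideanSpace ℝ (Fin n) | ⟪a i, u⟫ ≤ b i} := by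
      ext u; simp [hPdef, Set.mem_iInter]
    rw [this]
    exact isClosed_iInter fun i =>
      isClosed_le (Continuous.inner continuous_const continuous_id) continuous_const
  have hPconvex : Convex ℝ P := by
    intro u hu w hw s t hs ht hst
    intro i
    have h1 := hu i
    have h2 := hw i
    have : ⟪a i, s • u + t • w⟫ = s * ⟪a i, u⟫ + t * ⟪a i, w⟫ := by
      rw [inner_add_right, real_inner_smul_right, real_inner_smul_right]
    rw [this]
    calc s * ⟪a i, u⟫ + t * ⟪a i, w⟫ ≤ s * b i + t * b i :=
          add_le_add (mul_le_mul_of_nonneg_left h1 hs) (mul_le_mul_of_nonneg_left h2 ht)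
      _ = b i := by rw [← add_mul, hst, one_mul]
  obtain ⟨y, hyP, hyd⟩ := hPclosed.exists_infDist_eq_dist hne x
  rw [hyd]
  by_cases hxy : x = y
  · rw [hxy, dist_self]
    positivity
  have hvne : x - y ≠ 0 := sub_ne_zero.mpr hxy
  have hvpos : 0 < ‖x - y‖ := norm_pos_iff.mpr hvne
  -- variational inequality
  have hmin : ∀ w ∈ P, dist x y ≤ dist x w := fun w hw =>
    hyd ▸ Metric.infDist_le_dist_of_mem hw
  have hvar : ∀ w ∈ P, ⟪x - y, w - y⟫ ≤ 0 := by
    haveI : Nonempty ↥P := hne.to_subtype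
    have hinf : ‖x - y‖ = ⨅ w : P, ‖x - w‖ := by
      apply le_antisymm
      · apply le_ciInf
        intro w
        rw [← dist_eq_norm, ← dist_eq_norm]
        exact hmin w w.2
      · refine ciInf_le ?_ (⟨y, hyP⟩ : ↥P)
        refine ⟨0, ?_⟩
        rintro r ⟨w, rfl⟩
        exact norm_nonneg _
    exact (norm_eq_iInf_iff_real_inner_le_zero hPconvex hyP).mp hinf
  -- active set
  set I : Finset (Fin m) := Finset.univ.filter (fun i => ⟪a i, y⟫ = b i) with hIdef
  have hFa : ∀ d : EuclideanSpace ℝ (Fin n),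
      (∀ i : ↥I, ⟪a i.1, d⟫ ≤ 0) → ⟪x - y, d⟫ ≤ 0 := by
    intro d hd
    set F := insert (1:ℝ) ((Finset.univ.filter (fun i => 0 < ⟪a i, d⟫)).image
      fun i => (b i - ⟪a i, y⟫) / ⟪a i, d⟫) with hFdef
    have hFne : F.Nonempty := ⟨1, Finset.mem_insert_self _ _⟩
    set t := F.min' hFne with htdef
    have hmempos : ∀ r ∈ F, 0 < r := by
      intro r hr
      rcases Finset.mem_insert.mp hr with h | h
      · rw [h]; norm_num
      · obtain ⟨i, hiT, rfl⟩ := Finset.mem_image.mp h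
        have hid : 0 < ⟪a i, d⟫ := (Finset.mem_filter.mp hiT).2
        have hib : ⟪a i, y⟫ < b i := by
          rcases lt_or_eq_of_le (hyP i) with h' | h'
          · exact h'
          · exact absurd (hd ⟨i, Finset.mem_filter.mpr ⟨Finset.mem_univ _, h'⟩⟩) (not_le.mpr hid)
        exact div_pos (by linarith) hid
      
    have ht0 : 0 < t := hmempos _ (F.min'_mem hFne)
    have hwP : y + t • d ∈ P := by
      intro i
      have hsplit : ⟪a i, y + t • d⟫ = ⟪a i, y⟫ + t * ⟪a i, d⟫ := by
        rw [inner_add_right, real_inner_smul_right]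
      rw [hsplit]
      rcases le_or_gt ⟪a i, d⟫ 0 with h | h
      · have h2 : t * ⟪a i, d⟫ ≤ 0 := mul_nonpos_of_nonneg_of_nonpos ht0.le h
        have := hyP i
        linarith
      · have hiT : i ∈ Finset.univ.filter (fun j => 0 < ⟪a j, d⟫) :=
          Finset.mem_filter.mpr ⟨Finset.mem_univ _, h⟩
        have hle : t ≤ (b i - ⟪a i, y⟫) / ⟪a i, d⟫ :=
          Finset.min'_le _ _ (Finset.mem_insert_of_mem (Finset.mem_image_of_mem _ hiT))
        rw [le_div_iff₀ h] at hle
        linarith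
    have h1 := hvar _ hwP
    rw [add_sub_cancel_left, real_inner_smul_right] at h1
    nlinarith
  obtain ⟨lam, hlam0, hlamsum⟩ := farkasLemma (fun i : ↥I => a i.1) (x - y) hFa
  set lamE : Fin m → ℝ := fun i => if h : i ∈ I then lam ⟨i, h⟩ else 0 with hlamE
  have hlamE0 : ∀ i, 0 ≤ lamE i := by
    intro i
    show 0 ≤ if h : i ∈ I then lam ⟨i, h⟩ else 0
    by_cases h : i ∈ I
    · rw [dif_pos h]; exact hlam0 _
    · rw [dif_neg h]
  have hsumE : ∑ i, lamE i • a i = x - y := by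
    rw [← sum_subtype_eq_of_support I (fun i => lamE i • a i)
      (fun i hi => by
        show lamE i • a i = 0
        rw [show lamE i = 0 from dif_neg hi, zero_smul])]
    rw [hlamsum]
    apply Finset.sum_congr rfl
    intro i _
    show (if h : ↑i ∈ I then lam ⟨↑i, h⟩ else 0) • a ↑i = lam i • a ↑i
    rw [dif_pos i.2]
  obtain ⟨mu, hmu0, hmusupp, hmusum, hmuli⟩ := coneCarath a lamE hlamE0
  have hmusum' : ∑ i, mu i • a i = x - y := hmusum.trans hsumE
  set S : Finset (Fin m) := Finset.univ.filter (fun i => mu i ≠ 0) with hSdef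
  have hSli : LinearIndependent ℝ (fun i : ↥S => a ↑i) := by
    let eq : ↥S ≃ {i // mu i ≠ 0} := Equiv.subtypeEquivRight (fun i => by simp [hSdef])
    have h := hmuli.comp eq eq.injective
    have hcomp : ((fun i : {i // mu i ≠ 0} => a ↑i) ∘ eq) = fun i : ↥S => a ↑i := by
      funext i
      simp [eq, Equiv.subtypeEquivRight]
      rfl
    rwa [hcomp] at h
  have hactive : ∀ i, mu i ≠ 0 → ⟪a i, y⟫ = b i := by
    intro i h
    have h1 : lamE i ≠ 0 := fun h2 => h (hmusupp i h2)
    have h2 : i ∈ I := by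
      by_contra h3
      exact h1 (dif_neg h3)
    exact (Finset.mem_filter.mp h2).2
  -- main estimate
  have hv2 : ‖x - y‖ ^ 2 ≤ (∑ i, mu i) * e := by
    rw [← real_inner_self_eq_norm_sq]
    have hinner : ⟪x - y, x - y⟫ = ∑ i, mu i * ⟪a i, x - y⟫ := by
      nth_rewrite 1 [← hmusum']
      rw [sum_inner]
      apply Finset.sum_congr rfl
      intro i _
      rw [real_inner_smul_left]
    rw [hinner, Finset.sum_mul]
    apply Finset.sum_le_sum
    intro i _
    by_cases h : mu i = 0
    · rw [h, zero_mul, zero_mul]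
    · have hact := hactive i h
      have : ⟪a i, x - y⟫ = ⟪a i, x⟫ - b i := by
        rw [inner_sub_right, hact]
      rw [this]
      exact mul_le_mul_of_nonneg_left (hemax i) (hmu0 i)
  have hsum_mu : ∑ i, mu i ≤ C S * ‖x - y‖ := by
    have hs1 : ∑ i : ↥S, mu ↑i • a ↑i = x - y := by
      rw [← hmusum']
      exact sum_subtype_eq_of_support S (fun i => mu i • a i)
        (fun i hi => by
          show mu i • a i = 0
          have : mu i = 0 := by
            by_contra h
            exact hi (by simp [hSdef, h])
          rw [this, zero_smul])
    have hw := hC S hSli (fun i : ↥S => mu ↑i)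
    rw [hs1] at hw
    have hs2 : ∑ i, mu i = ∑ i : ↥S, |mu ↑i| := by
      rw [show (fun i : ↥S => |mu ↑i|) = fun i : ↥S => mu ↑i from
        funext fun i => abs_of_nonneg (hmu0 _)]
      rw [sum_subtype_eq_of_support S mu
        (fun i hi => by
          by_contra h
          exact hi (by simp [hSdef, h]))]
    rw [hs2]
    exact hw
  have hfin : ‖x - y‖ ≤ C S * e := by
    have h1 : (∑ i, mu i) * e ≤ C S * ‖x - y‖ * e :=
      mul_le_mul_of_nonneg_right hsum_mu he0
    have h2 : ‖x - y‖ * ‖x - y‖ ≤ (C S * e) * ‖x - y‖ := by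
      have := hv2.trans h1
      rw [pow_two] at this
      linarith [this]
    exact le_of_mul_le_mul_right h2 hvpos
  have hCle : C S ≤ 1 + ∑ S' : Finset (Fin m), C S' := by
    have := Finset.single_le_sum (fun S' (_ : S' ∈ Finset.univ) => hC0 S') (Finset.mem_univ S)
    linarith
  calc dist x y = ‖x - y‖ := dist_eq_norm x y
    _ ≤ C S * e := hfin
    _ ≤ (1 + ∑ S' : Finset (Fin m), C S') * e := mul_le_mul_of_nonneg_right hCle he0
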